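/- For 0 ≤ i ≤ d, ψW_i ⊆ W_{i−1}. -/

import Mathlib

lemma aux_indep_sum_eq_zero {R M ι : Type*} [Ring R] [AddCommGroup M] [Module R M]
    [Fintype ι] [DecidableEq ι] {p : ι → Submodule R M} (h : iSupIndep p) (c : ι → M)
    (hc : ∀ i, c i ∈ p i) (hsum : ∑ i, c i = 0) : ∀ i, c i = 0 := by
  intro i
  have hrest : ∑ j ∈ Finset.univ.erase i, c j ∈ ⨆ (j) (_ : j ≠ i), p j := by
    refine Submodule.sum_mem _ fun j hj => ?_
    exact Submodule.mem_iSup_of_mem j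
      (Submodule.mem_iSup_of_mem (Finset.ne_of_mem_erase hj) (hc j))
  have hci : c i = -∑ j ∈ Finset.univ.erase i, c j := by
    have h2 := Finset.add_sum_erase Finset.univ c (Finset.mem_univ i)
    rw [hsum] at h2
    exact eq_neg_of_add_eq_zero_left h2
  have hmem : c i ∈ ⨆ (j) (_ : j ≠ i), p j := by
    rw [hci]; exact neg_mem hrest
  exact (Submodule.disjoint_def.mp (h i)) (c i) (hc i) hmem


theorem stmt_13
    {𝕂 : Type*} [Field 𝕂] {V : Type*} [AddCommGroup V] [Module 𝕂 V]
    [FiniteDimensional 𝕂 V]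
    (d : ℕ) (hd : 1 ≤ d) (q a : 𝕂) (hq : q ≠ 0) (ha : a ≠ 0)
    (hq2 : ∀ i : ℕ, 1 ≤ i → i ≤ d → q ^ (2 * i) ≠ 1)
    (ha2 : ∀ i : ℤ, 1 - (d : ℤ) ≤ i → i ≤ (d : ℤ) - 1 → a ^ 2 ≠ q ^ (2 * i))
    (K : Module.End 𝕂 V) (hK : IsUnit K)
    (U : ℕ → Submodule 𝕂 V)
    (hUne : ∀ i, i ≤ d → U i ≠ ⊥)
    (hUint : DirectSum.IsInternal (fun i : Fin (d + 1) => U i.1))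
    (hKU : ∀ i, i ≤ d → ∀ v ∈ U i, K v = (q ^ ((d : ℤ) - 2 * (i : ℤ))) • v)
    (ψ : Module.End 𝕂 V)
    (hψ0 : ∀ v ∈ U 0, ψ v = 0)
    (hψU : ∀ i, 1 ≤ i → i ≤ d → ∀ v ∈ U i, ψ v ∈ U (i - 1))
    (hψnil : ψ ^ (d + 1) = 0)
    (hKψ : K * ψ = q ^ 2 • (ψ * K))
    (hinv : ∀ x : 𝕂, IsUnit (1 - x • ψ))
    (B : Module.End 𝕂 V)
    (hB : B = (1 - (a * q) • ψ) * Ring.inverse (1 - (a⁻¹ * q) • ψ) * K)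
    (M : Module.End 𝕂 V)
    (hM : M = (a - a⁻¹)⁻¹ • (a • K - a⁻¹ • B))
    (hMunit : IsUnit M):
    ∀ i, i ≤ d →
      Submodule.map ψ (Module.End.eigenspace M (q ^ ((d : ℤ) - 2 * (i : ℤ))))
        ≤ if i = 0 then ⊥ else Module.End.eigenspace M (q ^ ((d : ℤ) - 2 * ((i - 1) : ℤ))) := by
  -- abbreviations
  set u : Module.End 𝕂 V := 1 - (a⁻¹ * q) • ψ with hu_def
  have hu : IsUnit u := hinv _
  -- a - a⁻¹ ≠ 0
  have haa : a - a⁻¹ ≠ 0 := by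
    intro h0
    have h1 : a = a⁻¹ := sub_eq_zero.mp h0
    have h2 : a ^ 2 = 1 := by
      rw [sq]; nth_rewrite 2 [h1]; exact mul_inv_cancel₀ ha
    exact ha2 0 (by omega) (by omega) (by simpa using h2)
  have hbase : ∀ x y : 𝕂, ((1 : Module.End 𝕂 V) - x • ψ) * (1 - y • ψ)
      = (1 - y • ψ) * (1 - x • ψ) := by
    intro x y
    simp only [mul_sub, sub_mul, mul_one, one_mul, mul_smul_comm, smul_mul_assoc,
      smul_smul, smul_sub]
    module
  -- ψ commutes with u
  have hcommu : ψ * u = u * ψ := by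
    simp [hu_def, mul_sub, sub_mul, mul_smul_comm, smul_mul_assoc]
  -- ψ commutes with inverse of u
  have hcominv : ψ * Ring.inverse u = Ring.inverse u * ψ := by
    obtain ⟨w, hw⟩ := hu
    have hcw : Commute ψ (w : Module.End 𝕂 V) := by rw [hw]; exact hcommu
    have := hcw.units_inv_right
    rw [← hw, Ring.inverse_unit]
    exact this.eq
  -- the key formula M = u⁻¹ K
  have hMeq : M = Ring.inverse u * K := by
    have hcomm2 : (1 - (a * q) • ψ) * Ring.inverse u = Ring.inverse u * (1 - (a * q) • ψ) := by
      obtain ⟨w, hw⟩ := hu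
      have hcw : Commute (1 - (a * q) • ψ) (w : Module.End 𝕂 V) := by
        rw [hw, hu_def]
        exact hbase _ _
      rw [← hw, Ring.inverse_unit]
      exact hcw.units_inv_right.eq
    have hkey : u * (a • K - a⁻¹ • B) = (a - a⁻¹) • K := by
      rw [hB]
      have h0 : u * ((1 - (a * q) • ψ) * Ring.inverse u) = 1 - (a * q) • ψ := by
        rw [hcomm2, ← mul_assoc, Ring.mul_inverse_cancel u hu, one_mul]
      have h1 : u * ((1 - (a * q) • ψ) * Ring.inverse u * K)
          = (1 - (a * q) • ψ) * K := by
        rw [← mul_assoc, h0]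
      rw [mul_sub, mul_smul_comm, mul_smul_comm, h1]
      have expand : u * K = K - (a⁻¹ * q) • (ψ * K) := by
        rw [hu_def]; simp [sub_mul, smul_mul_assoc]
      have expand2 : ((1 : Module.End 𝕂 V) - (a * q) • ψ) * K = K - (a * q) • (ψ * K) := by
        simp [sub_mul, smul_mul_assoc]
      rw [expand, expand2]
      module
    have : a • K - a⁻¹ • B = (a - a⁻¹) • (Ring.inverse u * K) := by
      have := congrArg (fun X => Ring.inverse u * X) hkey
      simpa [← mul_assoc, Ring.inverse_mul_cancel u hu, mul_smul_comm] using this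
    rw [hM, this, smul_smul, inv_mul_cancel₀ haa, one_smul]
  -- K = u * M
  have hKM : K = u * M := by
    rw [hMeq, ← mul_assoc, Ring.mul_inverse_cancel u hu, one_mul]
  -- commutation of M with ψ
  have hMψ : M * ψ = q ^ 2 • (ψ * M) := by
    rw [hMeq, mul_assoc, hKψ, mul_smul_comm, ← mul_assoc, ← hcominv, mul_assoc, ← mul_assoc]
  -- eigenvalues distinct from q^d
  have hne : ∀ j : ℕ, 1 ≤ j → j ≤ d → q ^ ((d : ℤ) - 2 * (j : ℤ)) ≠ q ^ (d : ℤ) := by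
    intro j h1 h2 heq
    apply hq2 j h1 h2
    have hq2j : q ^ ((2 * j : ℕ) : ℤ) = q ^ (2 * j) := zpow_natCast q (2 * j)
    have hmul : q ^ ((d : ℤ) - 2 * (j : ℤ)) * q ^ (2 * (j : ℤ)) = q ^ (d : ℤ) := by
      rw [← zpow_add₀ hq]; congr 1; ring
    rw [heq] at hmul
    have hqd : q ^ (d : ℤ) ≠ 0 := zpow_ne_zero _ hq
    have h3 : q ^ (2 * (j : ℤ)) = 1 := by
      apply mul_left_cancel₀ hqd
      rw [hmul, mul_one]
    have hcst : ((2 * j : ℕ) : ℤ) = 2 * (j : ℤ) := by push_cast; ring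
    rw [← hq2j, hcst]
    exact h3
  -- main argument
  intro i hi
  by_cases hi0 : i = 0
  · subst hi0
    simp only [if_pos]
    rintro v ⟨w, hw, rfl⟩
    rw [Submodule.mem_bot]
    rw [SetLike.mem_coe, Module.End.mem_eigenspace_iff] at hw
    have hw' : M w = q ^ (d : ℤ) • w := by
      have hcast : (d : ℤ) - 2 * ((0 : ℕ) : ℤ) = (d : ℤ) := by push_cast; ring
      rw [← hcast]; exact hw
    set t : 𝕂 := q ^ (d : ℤ) * (a⁻¹ * q) with ht_def
    have hKw : K w = q ^ (d : ℤ) • w - t • ψ w := by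
      have h1 : K w = u (M w) := by rw [hKM]; rfl
      rw [h1, hw', map_smul, hu_def]
      simp only [LinearMap.sub_apply, Module.End.one_apply, LinearMap.smul_apply,
        smul_sub, smul_smul, ht_def]
    -- decompose w
    have hwtop : w ∈ ⨆ i : Fin (d + 1), U i.1 := by
      rw [hUint.submodule_iSup_eq_top]; trivial
    rw [Submodule.mem_iSup_iff_exists_finsupp] at hwtop
    obtain ⟨f, hfU, hfsum⟩ := hwtop
    have hfsum' : ∑ i : Fin (d + 1), f i = w := by
      rw [← hfsum, Finsupp.sum_fintype]
      intro; rfl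
    set c : ℕ → V := fun j => if h : j < d + 1 then f ⟨j, h⟩ else 0 with hc_def
    have hcU : ∀ j, c j ∈ U j := by
      intro j
      by_cases h : j < d + 1
      · simp only [hc_def, dif_pos h]; exact hfU ⟨j, h⟩
      · simp only [hc_def, dif_neg h]; exact Submodule.zero_mem _
    have hctop : c (d + 1) = 0 := by simp [hc_def]
    have hcw : w = ∑ j ∈ Finset.range (d + 1), c j := by
      rw [← hfsum']
      rw [← Fin.sum_univ_eq_sum_range]
      apply Finset.sum_congr rfl
      intro x _
      simp [hc_def]
      intro h; exact absurd x.isLt (by omega)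
    set lam : ℕ → 𝕂 := fun j => q ^ ((d : ℤ) - 2 * (j : ℤ)) with hlam_def
    have hEK : K w = ∑ j ∈ Finset.range (d + 1), lam j • c j := by
      rw [hcw, map_sum]
      apply Finset.sum_congr rfl
      intro j hj
      exact hKU j (by have := Finset.mem_range.mp hj; omega) (c j) (hcU j)
    set E : ℕ → V := fun j => (lam j - q ^ (d : ℤ)) • c j + t • ψ (c (j + 1)) with hE_def
    have hEU : ∀ j, j ≤ d → E j ∈ U j := by
      intro j hj
      apply Submodule.add_mem
      · exact Submodule.smul_mem _ _ (hcU j)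
      · by_cases h : j = d
        · subst h; rw [hctop]; simp
        · have h2 := hψU (j + 1) (by omega) (by omega) (c (j + 1)) (hcU (j + 1))
          simpa [Nat.add_sub_cancel] using Submodule.smul_mem _ t h2
    have hEsum : ∑ j ∈ Finset.range (d + 1), E j = 0 := by
      have hsplit : ∑ j ∈ Finset.range (d + 1), E j
          = (∑ j ∈ Finset.range (d + 1), (lam j - q ^ (d : ℤ)) • c j)
            + t • ψ (∑ j ∈ Finset.range (d + 1), c (j + 1)) := by
        rw [map_sum, Finset.smul_sum, ← Finset.sum_add_distrib]
      have hshift : ∑ j ∈ Finset.range (d + 1), c (j + 1) = w - c 0 := by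
        have h1 : ∑ j ∈ Finset.range (d + 2), c j
            = (∑ j ∈ Finset.range (d + 1), c (j + 1)) + c 0 := Finset.sum_range_succ' c (d + 1)
        have h2 : ∑ j ∈ Finset.range (d + 2), c j
            = (∑ j ∈ Finset.range (d + 1), c j) + c (d + 1) := Finset.sum_range_succ c (d + 1)
        rw [hctop, add_zero, ← hcw] at h2
        rw [h2] at h1
        exact eq_sub_of_add_eq h1.symm
      have hfirst : ∑ j ∈ Finset.range (d + 1), (lam j - q ^ (d : ℤ)) • c j
          = K w - q ^ (d : ℤ) • w := by
        simp only [sub_smul]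
        rw [Finset.sum_sub_distrib, ← hEK, ← Finset.smul_sum, ← hcw]
      rw [hsplit, hshift, hfirst, map_sub, hψ0 (c 0) (hcU 0), sub_zero, hKw]
      abel
    have hEzero : ∀ j, j ≤ d → E j = 0 := by
      intro j hj
      have key := aux_indep_sum_eq_zero hUint.submodule_iSupIndep
        (fun i : Fin (d + 1) => E i.1) (fun i => hEU i.1 (by omega)) ?_ ⟨j, by omega⟩
      · exact key
      · rw [Fin.sum_univ_eq_sum_range]; exact hEsum
    have step : ∀ j, 1 ≤ j → j ≤ d → c (j + 1) = 0 → c j = 0 := by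
      intro j h1 h2 hnext
      have hEj := hEzero j h2
      rw [hE_def] at hEj
      simp only [hnext, map_zero, smul_zero, add_zero] at hEj
      rcases smul_eq_zero.mp hEj with h | h
      · exact absurd h (sub_ne_zero.mpr (hne j h1 h2))
      · exact h
    have hzero : ∀ k j, 1 ≤ j → j ≤ d → d ≤ j + k → c j = 0 := by
      intro k
      induction k with
      | zero =>
        intro j h1 h2 h3
        have hjd : j = d := by omega
        apply step j h1 h2
        subst hjd
        exact hctop
      | succ k ih =>
        intro j h1 h2 h3
        by_cases hjk : d ≤ j + k
        · exact ih j h1 h2 hjk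
        · exact step j h1 h2 (ih (j + 1) (by omega) (by omega) (by omega))
    have hcj : ∀ j, 1 ≤ j → j ≤ d → c j = 0 := fun j h1 h2 => hzero d j h1 h2 (by omega)
    have hw0 : w = c 0 := by
      rw [hcw, Finset.sum_range_succ' c d]
      rw [Finset.sum_eq_zero, zero_add]
      intro j hj
      exact hcj (j + 1) (by omega) (by have := Finset.mem_range.mp hj; omega)
    rw [hw0]
    exact hψ0 (c 0) (hcU 0)
  · simp only [if_neg hi0]
    rintro v ⟨w, hw, rfl⟩
    rw [SetLike.mem_coe, Module.End.mem_eigenspace_iff] at hw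
    rw [Module.End.mem_eigenspace_iff]
    have h1 : M (ψ w) = (q ^ 2 * q ^ ((d : ℤ) - 2 * (i : ℤ))) • ψ w := by
      have h2 := congrArg (fun T : Module.End 𝕂 V => T w) hMψ
      simp only [Module.End.mul_apply, LinearMap.smul_apply] at h2
      rw [h2, hw, map_smul, smul_smul]
    rw [h1]
    have h5 : q ^ (2 : ℤ) = q ^ (2 : ℕ) := by
      rw [← zpow_natCast]; norm_num
    have h4 : q ^ ((d : ℤ) - 2 * ((i : ℤ) - 1)) = q ^ 2 * q ^ ((d : ℤ) - 2 * (i : ℤ)) := by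
      rw [show (d : ℤ) - 2 * ((i : ℤ) - 1) = 2 + ((d : ℤ) - 2 * (i : ℤ)) by ring,
        zpow_add₀ hq, h5]
    rw [h4]
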